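/- Let X be finite, w : X → ℝ≥0 a weight function, v > 0 a threshold, and define for a sequence S, position N, and alternative x the cumulative weight W_S^N(x) := (number of i ≤ N with S(i) = x) · w(x). Suppose d is the Cardinal Satisficing Rule: d(S) = x iff there is N with W_S^N(x) ≥ v > W_S^N(y) for all y ≠ x, and assume such an x and N exist for every S. Then d satisfies Monotonicity: if d(S) = x and S' is obtained from S either by deleting a single term not equal to x, or by swapping adjacent terms S(k), S(k+1) with S(k+1) = x, then d(S') = x. -/

import Mathlib

/-- Cumulative weight of alternative `x` among the first `N` terms of `S`. -/
def cumWeight {X : Type*} [DecidableEq X] (w : X → ℝ) (S : ℕ → X) (N : ℕ) (x : X) : ℝ :=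
  ((Finset.range N).filter (fun i => S i = x)).card * w x

open Finset in
private lemma count_del {X : Type*} [DecidableEq X] (S : ℕ → X) (k M : ℕ) (hkM : k ≤ M)
    (y : X) :
    ((range (M+1)).filter (fun i => S i = y)).card =
    ((range M).filter (fun i => (if i < k then S i else S (i+1)) = y)).card
      + (if S k = y then 1 else 0) := by
  have hsplit : range (M+1) = range k ∪ Ico k (M+1) := by
    rw [range_eq_Ico, ← Finset.Ico_union_Ico_eq_Ico (Nat.zero_le k) (by omega), ← range_eq_Ico]
  have hsplit' : range M = range k ∪ Ico k M := by
    rw [range_eq_Ico, ← Finset.Ico_union_Ico_eq_Ico (Nat.zero_le k) hkM, ← range_eq_Ico]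
  have hdisj : Disjoint (range k) (Ico k (M+1)) := by
    rw [range_eq_Ico]; exact Finset.Ico_disjoint_Ico_consecutive 0 k (M+1)
  have hdisj' : Disjoint (range k) (Ico k M) := by
    rw [range_eq_Ico]; exact Finset.Ico_disjoint_Ico_consecutive 0 k M
  have hIco : Ico k (M+1) = insert k (Ico (k+1) (M+1)) :=
    (Finset.insert_Ico_add_one_left_eq_Ico (by omega)).symm
  have hbij : ((Ico (k+1) (M+1)).filter (fun i => S i = y)).card
      = ((Ico k M).filter (fun i => S (i+1) = y)).card := by
    refine Finset.card_bij' (fun i _ => i - 1) (fun j _ => j + 1) ?_ ?_ ?_ ?_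
    · intro a ha
      simp only [mem_filter, mem_Ico] at ha ⊢
      exact ⟨⟨by omega, by omega⟩, by rw [show a - 1 + 1 = a by omega]; exact ha.2⟩
    · intro a ha
      simp only [mem_filter, mem_Ico] at ha ⊢
      exact ⟨⟨by omega, by omega⟩, ha.2⟩
    · intro a ha; simp only [mem_filter, mem_Ico] at ha; omega
    · intro a ha; omega
  have h1 : ((range k).filter (fun i => (if i < k then S i else S (i+1)) = y))
      = (range k).filter (fun i => S i = y) := by
    apply Finset.filter_congr
    intro i hi
    simp only [mem_range] at hi
    simp [hi]
  have h2 : ((Ico k M).filter (fun i => (if i < k then S i else S (i+1)) = y))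
      = (Ico k M).filter (fun i => S (i+1) = y) := by
    apply Finset.filter_congr
    intro i hi
    simp only [mem_Ico] at hi
    simp [Nat.not_lt.mpr hi.1]
  rw [hsplit, hsplit', Finset.filter_union, Finset.filter_union,
    Finset.card_union_of_disjoint (Finset.disjoint_filter_filter hdisj),
    Finset.card_union_of_disjoint (Finset.disjoint_filter_filter hdisj'),
    hIco, Finset.filter_insert, h1, h2, ← hbij]
  by_cases hk : S k = y
  · rw [if_pos hk, Finset.card_insert_of_notMem (by simp [Finset.mem_filter]), if_pos hk]
    omega
  · rw [if_neg hk, if_neg hk, add_zero]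

open Finset in
private lemma count_swap_big {X : Type*} [DecidableEq X] (S : ℕ → X) (k N : ℕ)
    (hN : k + 2 ≤ N) (y : X) :
    ((range N).filter
      (fun i => (if i = k then S (k+1) else if i = k+1 then S k else S i) = y)).card =
    ((range N).filter (fun i => S i = y)).card := by
  set g : ℕ → ℕ := fun i => if i = k then k+1 else if i = k+1 then k else i with hg
  have hgS : ∀ i, (if i = k then S (k+1) else if i = k+1 then S k else S i) = S (g i) := by
    intro i
    by_cases h1 : i = k
    · simp [hg, h1]
    · by_cases h2 : i = k+1 <;> simp [hg, h1, h2]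
  have hgg : ∀ i, g (g i) = i := by
    intro i
    by_cases h1 : i = k
    · simp [hg, h1]
    · by_cases h2 : i = k+1 <;> simp [hg, h1, h2]
  have hglt : ∀ i, i < N → g i < N := by
    intro i hi
    by_cases h1 : i = k
    · simp [hg, h1]; omega
    · by_cases h2 : i = k+1 <;> simp [hg, h1, h2] <;> omega
  refine Finset.card_bij' (fun i _ => g i) (fun j _ => g j) ?_ ?_ ?_ ?_
  · intro a ha
    simp only [mem_filter, mem_range] at ha ⊢
    exact ⟨hglt a ha.1, by rw [← hgS a]; exact ha.2⟩
  · intro a ha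
    simp only [mem_filter, mem_range] at ha ⊢
    exact ⟨hglt a ha.1, by rw [hgS (g a), hgg a]; exact ha.2⟩
  · intro a _; exact hgg a
  · intro a _; exact hgg a

/-- The Cardinal Satisficing Rule satisfies Monotonicity: the choice is preserved
under favorable deletions and favorable shifts with respect to the chosen alternative. -/
theorem csr_monotonicity {X : Type*} [Finite X] [DecidableEq X]
    (w : X → ℝ) (hw : ∀ x, 0 ≤ w x) (v : ℝ) (hv : 0 < v)
    (d : (ℕ → X) → X)
    (hd : ∀ (S : ℕ → X) (x : X), d S = x ↔
      ∃ N : ℕ, v ≤ cumWeight w S N x ∧ ∀ y ≠ x, cumWeight w S N y < v)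
    (hwell : ∀ S : ℕ → X, ∃! x : X,
      ∃ N : ℕ, v ≤ cumWeight w S N x ∧ ∀ y ≠ x, cumWeight w S N y < v)
    (S : ℕ → X) (x : X) (hx : d S = x) :
    (∀ k : ℕ, S k ≠ x →
      d (fun i => if i < k then S i else S (i + 1)) = x) ∧
    (∀ k : ℕ, S (k + 1) = x →
      d (fun i => if i = k then S (k + 1) else if i = k + 1 then S k else S i) = x) := by
  rw [hd S x] at hx
  obtain ⟨N, hNx, hNy⟩ := hx
  have cast_le : ∀ (a b : ℕ) (y : X), a ≤ b →
      ((a : ℝ) * w y ≤ (b : ℝ) * w y) := by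
    intro a b y h
    exact mul_le_mul_of_nonneg_right (by exact_mod_cast h) (hw y)
  constructor
  · -- favorable deletion
    intro k hk
    rw [hd]
    by_cases hNk : N ≤ k
    · have heq : ∀ y, cumWeight w (fun i => if i < k then S i else S (i + 1)) N y
          = cumWeight w S N y := by
        intro y
        unfold cumWeight
        have hfe : (Finset.range N).filter
            (fun i => (fun i => if i < k then S i else S (i + 1)) i = y)
            = (Finset.range N).filter (fun i => S i = y) := by
          apply Finset.filter_congr
          intro i hi
          simp only [Finset.mem_range] at hi
          simp [show i < k by omega]
        rw [hfe]
      exact ⟨N, by rw [heq]; exact hNx, fun y hy => by rw [heq]; exact hNy y hy⟩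
    · -- k < N, use N - 1
      obtain ⟨M, rfl⟩ : ∃ M, N = M + 1 := ⟨N - 1, by omega⟩
      have hkM : k ≤ M := by omega
      refine ⟨M, ?_, ?_⟩
      · have hcount := count_del S k M hkM x
        rw [if_neg hk, add_zero] at hcount
        have : cumWeight w (fun i => if i < k then S i else S (i + 1)) M x
            = cumWeight w S (M+1) x := by
          unfold cumWeight
          rw [hcount]
        rw [this]; exact hNx
      · intro y hy
        have hcount := count_del S k M hkM y
        have hle : ((Finset.range M).filter
            (fun i => (if i < k then S i else S (i + 1)) = y)).card
            ≤ ((Finset.range (M+1)).filter (fun i => S i = y)).card := by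
          rw [hcount]; omega
        calc cumWeight w (fun i => if i < k then S i else S (i + 1)) M y
            ≤ cumWeight w S (M+1) y := cast_le _ _ y hle
          _ < v := hNy y hy
  · -- favorable shift
    intro k hkx
    rw [hd]
    have hagree : ∀ (m : ℕ), m ≤ k → ∀ y, (Finset.range m).filter
        (fun i => (fun i => if i = k then S (k + 1) else if i = k + 1 then S k else S i) i = y)
        = (Finset.range m).filter (fun i => S i = y) := by
      intro m hm y
      apply Finset.filter_congr
      intro i hi
      simp only [Finset.mem_range] at hi
      simp [show i ≠ k by omega, show i ≠ k + 1 by omega]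
    rcases lt_trichotomy N (k+1) with hN | hN | hN
    · -- N ≤ k : sequences agree on range N
      have heq : ∀ y,
          cumWeight w (fun i => if i = k then S (k + 1) else if i = k + 1 then S k else S i) N y
          = cumWeight w S N y := by
        intro y
        unfold cumWeight
        rw [hagree N (by omega) y]
      exact ⟨N, by rw [heq]; exact hNx, fun y hy => by rw [heq]; exact hNy y hy⟩
    · -- N = k+1
      subst hN
      refine ⟨k+1, ?_, ?_⟩
      · have h1 : ((Finset.range (k+1)).filter
            (fun i => (fun i => if i = k then S (k + 1) else if i = k + 1 then S k else S i) i
              = x)).card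
            = ((Finset.range k).filter (fun i => S i = x)).card + 1 := by
          rw [Finset.range_add_one, Finset.filter_insert, if_pos (by simp [hkx]),
            Finset.card_insert_of_notMem (by simp [Finset.mem_filter]), hagree k le_rfl x]
        have h2 : ((Finset.range (k+1)).filter (fun i => S i = x)).card
            ≤ ((Finset.range k).filter (fun i => S i = x)).card + 1 := by
          rw [Finset.range_add_one, Finset.filter_insert]
          by_cases h : S k = x
          · rw [if_pos h]
            exact Finset.card_insert_le _ _
          · rw [if_neg h]; omega
        calc v ≤ cumWeight w S (k+1) x := hNx
          _ ≤ cumWeight w (fun i => if i = k then S (k + 1) else if i = k + 1 then S k else S i)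
              (k+1) x := by
              unfold cumWeight; rw [h1]; exact cast_le _ _ x (by omega)
      · intro y hy
        have h1 : ((Finset.range (k+1)).filter
            (fun i => (fun i => if i = k then S (k + 1) else if i = k + 1 then S k else S i) i
              = y)).card
            = ((Finset.range k).filter (fun i => S i = y)).card := by
          rw [Finset.range_add_one, Finset.filter_insert,
            if_neg (by simp only [if_pos rfl]; rw [hkx]; exact fun h => hy h.symm),
            hagree k le_rfl y]
        have h2 : ((Finset.range k).filter (fun i => S i = y)).card
            ≤ ((Finset.range (k+1)).filter (fun i => S i = y)).card :=
          Finset.card_le_card (Finset.filter_subset_filter _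
            (Finset.range_subset_range.mpr (by omega)))
        calc cumWeight w (fun i => if i = k then S (k + 1) else if i = k + 1 then S k else S i)
              (k+1) y
            ≤ cumWeight w S (k+1) y := by
              unfold cumWeight; rw [h1]; exact cast_le _ _ y h2
          _ < v := hNy y hy
    · -- N ≥ k+2 : counts equal by swap bijection
      have heq : ∀ y,
          cumWeight w (fun i => if i = k then S (k + 1) else if i = k + 1 then S k else S i) N y
          = cumWeight w S N y := by
        intro y
        unfold cumWeight
        rw [count_swap_big S k N (by omega) y]
      exact ⟨N, by rw [heq]; exact hNx, fun y hy => by rw [heq]; exact hNy y hy⟩
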